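/- n-Shapley Values recover GAMs of order n (interventional SHAP): let μ be a probability measure on ℝ^d, let f : ℝ^d → ℝ be a generalized additive model of order n given by f(y) = ∑_{T ⊆ [d], |T| ≤ n} g_T(y) with each g_T bounded, measurable, and depending only on the coordinates of y in T, and let v(x,S) = ∫ f(P_S(x,z)) dμ(z) be the interventional value function, for 1 ≤ n ≤ d. Then for every x ∈ ℝ^d and every nonempty S ⊆ [d] with |S| ≤ n, the n-Shapley Value equals the Shapley-GAM component: Φ^n_S(x) = ∑_{L ⊆ S} (−1)^{|S|−|L|} · v(x, L). -/
import Mathlib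


open Finset

variable {α : Type*} [DecidableEq α]

lemma neg_one_pow_sub {a b : ℕ} (h : b ≤ a) : (-1:ℝ)^(a-b) = (-1)^a * (-1)^b := by
  have h1 : (-1:ℝ)^(a-b) * (-1)^b = (-1)^a := by rw [← pow_add, Nat.sub_add_cancel h]
  have h2 : ((-1:ℝ)^b) * ((-1)^b) = 1 := by
    rw [← pow_add, ← two_mul, pow_mul]; norm_num
  calc (-1:ℝ)^(a-b) = (-1)^(a-b) * (((-1:ℝ)^b) * ((-1)^b)) := by rw [h2, mul_one]
    _ = ((-1)^(a-b) * (-1)^b) * (-1)^b := by ring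
    _ = (-1)^a * (-1)^b := by rw [h1]

lemma sum_neg_one_pow_card (X : Finset α) :
    ∑ C ∈ X.powerset, (-1:ℝ)^C.card = if X = ∅ then 1 else 0 := by
  have := congrArg (fun q : ℤ => (q : ℝ)) (Finset.sum_powerset_neg_one_pow_card (x := X))
  push_cast at this
  simpa using this

lemma reindex_powerset_filter (X E : Finset α) (hE : E ⊆ X) (f : Finset α → ℝ) :
    ∑ A ∈ X.powerset.filter (fun A => E ⊆ A), f A = ∑ C ∈ (X \ E).powerset, f (E ∪ C) := by
  refine Finset.sum_nbij' (fun A => A \ E) (fun C => E ∪ C) ?_ ?_ ?_ ?_ ?_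
  · intro A hA
    simp only [mem_filter, mem_powerset] at hA ⊢
    exact sdiff_subset_sdiff hA.1 (Finset.Subset.refl E)
  · intro C hC
    simp only [mem_powerset] at hC
    simp only [mem_filter, mem_powerset]
    exact ⟨union_subset hE (hC.trans (sdiff_subset)), subset_union_left⟩
  · intro A hA
    simp only [mem_filter, mem_powerset] at hA
    exact union_sdiff_of_subset hA.2
  · intro C hC
    simp only [mem_powerset] at hC
    have hd : Disjoint E C := by
      have := hC.trans (sdiff_subset (s := X) (t := E))
      exact (disjoint_right.mpr (fun a ha => (mem_sdiff.mp (hC ha)).2))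
    show (E ∪ C) \ E = C
    rw [union_sdiff_cancel_left hd]
  · intro A hA
    simp only [mem_filter, mem_powerset] at hA
    rw [union_sdiff_of_subset hA.2]

lemma alt_sum_filter (S E : Finset α) (hE : E ⊆ S) :
    ∑ L ∈ S.powerset.filter (fun L => E ⊆ L), (-1:ℝ)^(S.card - L.card)
      = if E = S then 1 else 0 := by
  rw [reindex_powerset_filter S E hE]
  have hstep : ∀ C ∈ (S \ E).powerset,
      (-1:ℝ)^(S.card - (E ∪ C).card) = ((-1)^S.card * (-1)^E.card) * (-1)^C.card := by
    intro C hC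
    simp only [mem_powerset] at hC
    have hd : Disjoint E C := disjoint_right.mpr (fun a ha => (mem_sdiff.mp (hC ha)).2)
    have hsub : E ∪ C ⊆ S := union_subset hE (hC.trans sdiff_subset)
    rw [neg_one_pow_sub (card_le_card hsub), card_union_of_disjoint hd, pow_add]
    ring
  rw [Finset.sum_congr rfl hstep, ← Finset.mul_sum, sum_neg_one_pow_card]
  have hiff : S \ E = ∅ ↔ E = S := by
    constructor
    · intro h
      exact Finset.Subset.antisymm hE (fun a ha => by
        by_contra hna
        exact absurd (mem_sdiff.mpr ⟨ha, hna⟩) (by simp [h]))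
    · intro h; simp [h]
  by_cases h : E = S
  · subst h
    simp [hiff, ← pow_add, ← two_mul, pow_mul]
  · rw [if_neg (fun hc => h (hiff.mp hc)), if_neg h, mul_zero]

lemma sum_powerset_of_subset (X A : Finset α) (hA : A ⊆ X) (F : Finset α → ℝ) :
    ∑ L ∈ A.powerset, F L = ∑ L ∈ X.powerset, if L ⊆ A then F L else 0 := by
  rw [← Finset.sum_filter]
  congr 1
  ext L
  simp only [mem_filter, mem_powerset]
  exact ⟨fun h => ⟨h.trans hA, h⟩, fun h => h.2⟩

/-- Möbius inversion specialised to alternating sums on powersets. -/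
lemma moebius_inversion (w : Finset α → ℝ) (B : Finset α) :
    w B = ∑ A ∈ B.powerset, ∑ L ∈ A.powerset, (-1:ℝ)^(A.card - L.card) * w L := by
  have h1 : ∀ A ∈ B.powerset, ∑ L ∈ A.powerset, (-1:ℝ)^(A.card - L.card) * w L
      = ∑ L ∈ B.powerset, if L ⊆ A then (-1:ℝ)^(A.card - L.card) * w L else 0 := by
    intro A hA
    exact sum_powerset_of_subset B A (mem_powerset.mp hA) _
  rw [Finset.sum_congr rfl h1, Finset.sum_comm]
  have h2 : ∀ L ∈ B.powerset,
      (∑ A ∈ B.powerset, if L ⊆ A then (-1:ℝ)^(A.card - L.card) * w L else 0)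
      = (if L = B then 1 else 0) * w L := by
    intro L hL
    rw [← Finset.sum_filter, ← Finset.sum_mul]
    congr 1
    have hLB : L ⊆ B := mem_powerset.mp hL
    rw [reindex_powerset_filter B L hLB]
    have hstep : ∀ C ∈ (B \ L).powerset,
        (-1:ℝ)^((L ∪ C).card - L.card) = (-1)^C.card := by
      intro C hC
      simp only [mem_powerset] at hC
      have hd : Disjoint L C := disjoint_right.mpr (fun a ha => (mem_sdiff.mp (hC ha)).2)
      rw [card_union_of_disjoint hd, Nat.add_sub_cancel_left]
    rw [Finset.sum_congr rfl hstep, sum_neg_one_pow_card]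
    have hiff : B \ L = ∅ ↔ L = B := by
      constructor
      · intro h
        exact Finset.Subset.antisymm hLB (fun a ha => by
          by_contra hna
          exact absurd (mem_sdiff.mpr ⟨ha, hna⟩) (by simp [h]))
      · intro h; simp [h]
    by_cases h : L = B
    · simp [hiff, h]
    · rw [if_neg (fun hc => h (hiff.mp hc)), if_neg h]
  rw [Finset.sum_congr rfl h2]
  have : ∀ L ∈ B.powerset, (if L = B then 1 else 0) * w L = if L = B then w L else 0 := by
    intro L _; by_cases h : L = B <;> simp [h]
  rw [Finset.sum_congr rfl this, Finset.sum_ite_eq' B.powerset B w, if_pos (mem_powerset_self B)]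

lemma cancel_of_insert (w : Finset α → ℝ) (A : Finset α) (i : α) (hiA : i ∈ A)
    (hw : ∀ L, w (insert i L) = w L) :
    ∑ L ∈ A.powerset, (-1:ℝ)^(A.card - L.card) * w L = 0 := by
  have hA : A = insert i (A.erase i) := (Finset.insert_erase hiA).symm
  have hni : i ∉ A.erase i := Finset.notMem_erase i A
  rw [hA, Finset.sum_powerset_insert hni, ← Finset.sum_add_distrib]
  rw [Finset.sum_eq_zero]
  intro t ht
  simp only [mem_powerset] at ht
  have hit : i ∉ t := fun h => hni (ht h)
  have hcard : (insert i (A.erase i)).card = (A.erase i).card + 1 := by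
    rw [card_insert_of_notMem hni]
  have htcard : (insert i t).card = t.card + 1 := card_insert_of_notMem hit
  have hle : t.card ≤ (A.erase i).card := card_le_card ht
  rw [hw t, htcard, hcard]
  have he1 : (A.erase i).card + 1 - t.card = ((A.erase i).card - t.card) + 1 := by omega
  have he2 : (A.erase i).card + 1 - (t.card + 1) = (A.erase i).card - t.card := by omega
  rw [he1, he2, pow_succ]
  ring

lemma nat_term_id (b a j : ℕ) (hj : j ≤ b) :
    b.choose j * ((b - j).factorial * (j + a).factorial)
      = b.factorial * (a.factorial * (j + a).choose a) := by
  have h1 : b.choose j * j.factorial * (b - j).factorial = b.factorial :=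
    Nat.choose_mul_factorial_mul_factorial hj
  have h2 : (j + a).choose a * a.factorial * ((j + a) - a).factorial = (j + a).factorial :=
    Nat.choose_mul_factorial_mul_factorial (Nat.le_add_left a j)
  have h3 : (j + a) - a = j := by omega
  rw [h3] at h2
  apply Nat.eq_of_mul_eq_mul_right (Nat.factorial_pos j)
  calc b.choose j * ((b - j).factorial * (j + a).factorial) * j.factorial
      = (b.choose j * j.factorial * (b - j).factorial) * (j + a).factorial := by ring
    _ = b.factorial * (j + a).factorial := by rw [h1]
    _ = b.factorial * ((j + a).choose a * a.factorial * j.factorial) := by rw [h2]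
    _ = b.factorial * (a.factorial * (j + a).choose a) * j.factorial := by ring

lemma nat_fact_id (m a : ℕ) (h : a ≤ m) :
    (a + 1) * ∑ j ∈ Finset.range (m - a + 1),
        (m - a).choose j * ((m - a - j).factorial * (j + a).factorial)
      = (m + 1).factorial := by
  set b := m - a with hb
  have hsum : ∑ j ∈ Finset.range (b + 1), b.choose j * ((b - j).factorial * (j + a).factorial)
      = b.factorial * (a.factorial * ∑ j ∈ Finset.range (b + 1), (j + a).choose a) := by
    rw [Finset.mul_sum, Finset.mul_sum]
    refine Finset.sum_congr rfl fun j hj => ?_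
    exact nat_term_id b a j (by simp only [Finset.mem_range] at hj; omega)
  have hhs : ∑ j ∈ Finset.range (b + 1), (j + a).choose a = (m + 1).choose (a + 1) := by
    rw [← Nat.sum_Icc_choose m a]
    refine Finset.sum_nbij' (fun j => j + a) (fun i => i - a) ?_ ?_ ?_ ?_ ?_
    · intro j hj; simp only [Finset.mem_range] at hj; simp only [Finset.mem_Icc]; omega
    · intro i hi; simp only [Finset.mem_Icc] at hi; simp only [Finset.mem_range]; omega
    · intro j hj; show j + a - a = j; omega
    · intro i hi; simp only [Finset.mem_Icc] at hi; show i - a + a = i; omega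
    · intro j hj; rfl
  rw [hsum, hhs]
  have hkey : (m + 1).choose (a + 1) * (a + 1).factorial * (m - a).factorial
      = (m + 1).factorial := by
    have h3 : (m + 1) - (a + 1) = m - a := by omega
    have := Nat.choose_mul_factorial_mul_factorial (n := m + 1) (k := a + 1) (by omega)
    rw [h3] at this
    exact this
  rw [← hkey, Nat.factorial_succ a]
  ring

lemma choose_div_id (r k : ℕ) (hk : k ≤ r) :
    (r.choose k : ℝ) * (1 / ((r - k : ℕ) + 1)) = ((r+1).choose k : ℝ) * (1 / (r + 1)) := by
  have hnat : (r + 1) * r.choose k = (r + 1).choose k * ((r - k) + 1) := by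
    have h1 : (r+1) * r.choose k = (r+1).choose (k+1) * (k+1) := Nat.add_one_mul_choose_eq r k
    have h2 : (r+1).choose (k+1) * (k+1) = (r+1).choose k * ((r+1) - k) :=
      Nat.choose_succ_right_eq (r+1) k
    have h3 : (r + 1) - k = (r - k) + 1 := by omega
    rw [h1, h2, h3]
  have hpos1 : ((r - k : ℕ) : ℝ) + 1 > 0 := by positivity
  have hpos2 : (r : ℝ) + 1 > 0 := by positivity
  have hc := congrArg (fun q : ℕ => (q : ℝ)) hnat
  push_cast at hc
  rw [mul_one_div, mul_one_div, div_eq_div_iff (ne_of_gt hpos1) (ne_of_gt hpos2)]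
  nlinarith [hc]

lemma coeff_sum (d : ℕ) (S' F : Finset (Fin d)) (hF : F ⊆ S'ᶜ) :
    ∑ U ∈ S'ᶜ.powerset.filter (fun U => F ⊆ U),
        (((d - U.card - S'.card).factorial * U.card.factorial : ℕ) : ℝ) /
          (((d - S'.card + 1).factorial : ℕ) : ℝ)
      = 1 / ((F.card : ℝ) + 1) := by
  have hcompl : (S'ᶜ : Finset (Fin d)).card = d - S'.card := by
    simp [card_compl]
  set a := F.card with hadef
  set m := d - S'.card with hm
  have ha : a ≤ m := le_of_le_of_eq (card_le_card hF) hcompl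
  have hB : ((S'ᶜ \ F).card) = m - a := by rw [card_sdiff_of_subset hF, hcompl]
  rw [reindex_powerset_filter _ F hF]
  have hstep : ∀ C ∈ (S'ᶜ \ F).powerset,
      (((d - (F ∪ C).card - S'.card).factorial * (F ∪ C).card.factorial : ℕ) : ℝ) /
          (((d - S'.card + 1).factorial : ℕ) : ℝ)
        = (((m - a - C.card).factorial * (C.card + a).factorial : ℕ) : ℝ) /
          (((m + 1).factorial : ℕ) : ℝ) := by
    intro C hC
    simp only [mem_powerset] at hC
    have hd : Disjoint F C := disjoint_right.mpr (fun i hi => (mem_sdiff.mp (hC hi)).2)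
    have hcard : (F ∪ C).card = a + C.card := card_union_of_disjoint hd
    have h1 : d - (a + C.card) - S'.card = m - a - C.card := by omega
    have h2 : a + C.card = C.card + a := by omega
    rw [hcard, h1, h2, hm]
  rw [Finset.sum_congr rfl hstep, Finset.sum_powerset, hB]
  have hstep2 : ∀ j ∈ Finset.range (m - a + 1),
      (∑ C ∈ Finset.powersetCard j (S'ᶜ \ F),
        (((m - a - C.card).factorial * (C.card + a).factorial : ℕ) : ℝ) /
          (((m + 1).factorial : ℕ) : ℝ))
      = (((m - a).choose j * ((m - a - j).factorial * (j + a).factorial) : ℕ) : ℝ) /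
          (((m + 1).factorial : ℕ) : ℝ) := by
    intro j _
    have hconst : ∀ C ∈ Finset.powersetCard j (S'ᶜ \ F),
        (((m - a - C.card).factorial * (C.card + a).factorial : ℕ) : ℝ) /
          (((m + 1).factorial : ℕ) : ℝ)
        = (((m - a - j).factorial * (j + a).factorial : ℕ) : ℝ) /
          (((m + 1).factorial : ℕ) : ℝ) := by
      intro C hC
      rw [(Finset.mem_powersetCard.mp hC).2]
    rw [Finset.sum_congr rfl hconst, Finset.sum_const, Finset.card_powersetCard, hB,
      nsmul_eq_mul]
    push_cast
    ring
  rw [Finset.sum_congr rfl hstep2]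
  have hden : (((m + 1).factorial : ℕ) : ℝ) ≠ 0 := by
    exact_mod_cast Nat.factorial_pos (m+1) |>.ne'
  rw [← Finset.sum_div]
  have hN := nat_fact_id m a ha
  have hNr : ((a : ℝ) + 1) *
      ((∑ j ∈ Finset.range (m - a + 1),
        ((m - a).choose j * ((m - a - j).factorial * (j + a).factorial) : ℕ) : ℝ))
      = (((m + 1).factorial : ℕ) : ℝ) := by
    push_cast
    exact_mod_cast congrArg (fun q : ℕ => (q : ℝ)) hN
  rw [div_eq_div_iff hden (by positivity : ((a:ℝ) + 1) ≠ 0)]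
  push_cast at hNr ⊢
  linarith [hNr]

lemma bern_sum (N r : ℕ) (h : r ≤ N) :
    ∑ k ∈ Finset.range (N + 1), (bernoulli k : ℝ) *
        ((r.choose k : ℝ) * (1 / (((r - k : ℕ) : ℝ) + 1)))
      = if r = 0 then 1 else 0 := by
  have hsub : Finset.range (r + 1) ⊆ Finset.range (N + 1) := by
    apply Finset.range_subset_range.mpr; omega
  rw [← Finset.sum_subset hsub (by
    intro k hk1 hk2
    simp only [Finset.mem_range] at hk1 hk2
    have : r < k := by omega
    rw [Nat.choose_eq_zero_of_lt this]
    push_cast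
    ring)]
  have hstep : ∀ k ∈ Finset.range (r + 1),
      (bernoulli k : ℝ) * ((r.choose k : ℝ) * (1 / (((r - k : ℕ) : ℝ) + 1)))
      = (((r+1).choose k : ℝ) * (bernoulli k : ℝ)) * (1 / ((r : ℝ) + 1)) := by
    intro k hk
    simp only [Finset.mem_range] at hk
    rw [choose_div_id r k (by omega)]
    ring
  rw [Finset.sum_congr rfl hstep, ← Finset.sum_mul]
  have hq := congrArg (fun q : ℚ => (q : ℝ)) (sum_bernoulli (r + 1))
  push_cast at hq
  rw [hq]
  by_cases hr : r = 0
  · subst hr; norm_num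
  · rw [if_neg hr, if_neg hr]
    norm_num

lemma my_sdiff_subset_iff {A U L : Finset α} : A \ U ⊆ L ↔ A ⊆ U ∪ L := by
  constructor
  · intro h i hi
    by_cases hu : i ∈ U
    · exact mem_union_left _ hu
    · exact mem_union_right _ (h (mem_sdiff.mpr ⟨hi, hu⟩))
  · intro h i hi
    rcases mem_sdiff.mp hi with ⟨hiA, hiU⟩
    rcases mem_union.mp (h hiA) with h' | h'
    · exact absurd h' hiU
    · exact h'

/-- The measure of contribution `Δ_S(x)` associated with a value function `v` on
`d` features: `Δ_S(x) = ∑_{T ⊆ [d]∖S} ((d-|T|-|S|)!·|T|!/(d-|S|+1)!) ·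
∑_{L ⊆ S} (-1)^{|S|-|L|} · v(x, L ∪ T)`. -/
noncomputable def deltaContribution (d : ℕ) (v : (Fin d → ℝ) → Finset (Fin d) → ℝ)
    (x : Fin d → ℝ) (S : Finset (Fin d)) : ℝ :=
  ∑ T ∈ Sᶜ.powerset,
    (((d - T.card - S.card).factorial * T.card.factorial : ℕ) : ℝ) /
        (((d - S.card + 1).factorial : ℕ) : ℝ) *
      ∑ L ∈ S.powerset, (-1 : ℝ) ^ (S.card - L.card) * v x (L ∪ T)

/-- The `n`-Shapley Value of a subset `S` at a point `x`, for a value function `v`: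
`Φ^n_S(x) = ∑_{k=0}^{n-|S|} ∑_{K ⊆ [d]∖S, |K| = k} B_k · Δ_{S∪K}(x)`, where `B_k`
are the Bernoulli numbers with `B₁ = -1/2`. -/
noncomputable def nShapley (d : ℕ) (v : (Fin d → ℝ) → Finset (Fin d) → ℝ)
    (n : ℕ) (x : Fin d → ℝ) (S : Finset (Fin d)) : ℝ :=
  ∑ k ∈ Finset.range (n - S.card + 1),
    ∑ K ∈ Sᶜ.powerset.filter (fun K => K.card = k),
      (bernoulli k : ℝ) * deltaContribution d v x (S ∪ K)

/-- The alternating (Möbius) transform of the value function. -/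
noncomputable def mobius (d : ℕ) (v : (Fin d → ℝ) → Finset (Fin d) → ℝ)
    (x : Fin d → ℝ) (A : Finset (Fin d)) : ℝ :=
  ∑ L ∈ A.powerset, (-1 : ℝ) ^ (A.card - L.card) * v x L

lemma inner_sum_eq (d : ℕ) (v : (Fin d → ℝ) → Finset (Fin d) → ℝ) (x : Fin d → ℝ)
    (S' U : Finset (Fin d)) (hU : U ⊆ S'ᶜ) :
    ∑ L ∈ S'.powerset, (-1:ℝ)^(S'.card - L.card) * v x (L ∪ U)
      = ∑ A ∈ (S' ∪ U).powerset, (if S' ⊆ A then mobius d v x A else 0) := by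
  have hdisj : Disjoint S' U := disjoint_right.mpr (fun i hi => mem_compl.mp (hU hi))
  have hinv : ∀ B : Finset (Fin d), v x B = ∑ A ∈ B.powerset, mobius d v x A := by
    intro B
    simpa [mobius] using moebius_inversion (v x) B
  have h1 : ∀ L ∈ S'.powerset,
      (-1:ℝ)^(S'.card - L.card) * v x (L ∪ U)
      = ∑ A ∈ (S' ∪ U).powerset,
          (if A ⊆ L ∪ U then (-1:ℝ)^(S'.card - L.card) * mobius d v x A else 0) := by
    intro L hL
    simp only [mem_powerset] at hL
    rw [hinv (L ∪ U), Finset.mul_sum,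
      sum_powerset_of_subset (S' ∪ U) (L ∪ U) (union_subset_union hL (Finset.Subset.refl U)) _]
  rw [Finset.sum_congr rfl h1, Finset.sum_comm]
  refine Finset.sum_congr rfl fun A hA => ?_
  simp only [mem_powerset] at hA
  have hAU : A \ U ⊆ S' := by
    intro i hi
    rcases mem_sdiff.mp hi with ⟨hiA, hiU⟩
    rcases mem_union.mp (hA hiA) with h | h
    · exact h
    · exact absurd h hiU
  have hcond : ∀ L : Finset (Fin d), (A ⊆ L ∪ U) ↔ (A \ U ⊆ L) := by
    intro L
    rw [union_comm]
    exact my_sdiff_subset_iff.symm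
  have h2 : ∀ L ∈ S'.powerset,
      (if A ⊆ L ∪ U then (-1:ℝ)^(S'.card - L.card) * mobius d v x A else 0)
      = (if A \ U ⊆ L then (-1:ℝ)^(S'.card - L.card) else 0) * mobius d v x A := by
    intro L _
    rw [if_congr (hcond L) rfl rfl]
    split_ifs <;> ring
  rw [Finset.sum_congr rfl h2, ← Finset.sum_mul, ← Finset.sum_filter,
    alt_sum_filter S' (A \ U) hAU]
  have hiff : (A \ U = S') ↔ (S' ⊆ A) := by
    constructor
    · intro h
      rw [← h]
      exact sdiff_subset
    · intro h
      refine Finset.Subset.antisymm hAU (fun i hi => ?_)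
      exact mem_sdiff.mpr ⟨h hi, fun hiU => (disjoint_left.mp hdisj hi) hiU⟩
  by_cases h : S' ⊆ A
  · rw [if_pos (hiff.mpr h), if_pos h, one_mul]
  · rw [if_neg (fun hc => h (hiff.mp hc)), if_neg h, zero_mul]

lemma delta_eq (d : ℕ) (v : (Fin d → ℝ) → Finset (Fin d) → ℝ) (x : Fin d → ℝ)
    (S' : Finset (Fin d)) :
    deltaContribution d v x S'
      = ∑ A : Finset (Fin d),
          (if S' ⊆ A then mobius d v x A * (1 / (((A \ S').card : ℝ) + 1)) else 0) := by
  unfold deltaContribution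
  have h1 : ∀ U ∈ S'ᶜ.powerset,
      (((d - U.card - S'.card).factorial * U.card.factorial : ℕ) : ℝ) /
          (((d - S'.card + 1).factorial : ℕ) : ℝ) *
        ∑ L ∈ S'.powerset, (-1 : ℝ) ^ (S'.card - L.card) * v x (L ∪ U)
      = ∑ A : Finset (Fin d),
          (if A ⊆ S' ∪ U then
            (((d - U.card - S'.card).factorial * U.card.factorial : ℕ) : ℝ) /
              (((d - S'.card + 1).factorial : ℕ) : ℝ) *
            (if S' ⊆ A then mobius d v x A else 0) else 0) := by
    intro U hU
    simp only [mem_powerset] at hU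
    rw [inner_sum_eq d v x S' U hU, Finset.mul_sum,
      sum_powerset_of_subset Finset.univ (S' ∪ U) (subset_univ _) _, Finset.powerset_univ]
  rw [Finset.sum_congr rfl h1, Finset.sum_comm]
  refine Finset.sum_congr rfl fun A _ => ?_
  by_cases h : S' ⊆ A
  · have h2 : ∀ U ∈ S'ᶜ.powerset,
        (if A ⊆ S' ∪ U then
          (((d - U.card - S'.card).factorial * U.card.factorial : ℕ) : ℝ) /
            (((d - S'.card + 1).factorial : ℕ) : ℝ) *
          (if S' ⊆ A then mobius d v x A else 0) else 0)
        = (if A \ S' ⊆ U then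
            (((d - U.card - S'.card).factorial * U.card.factorial : ℕ) : ℝ) /
              (((d - S'.card + 1).factorial : ℕ) : ℝ) else 0) * mobius d v x A := by
      intro U _
      rw [if_pos h, if_congr my_sdiff_subset_iff.symm rfl rfl]
      split_ifs <;> ring
    rw [Finset.sum_congr rfl h2, ← Finset.sum_mul, ← Finset.sum_filter,
      coeff_sum d S' (A \ S') (fun i hi => mem_compl.mpr (mem_sdiff.mp hi).2), if_pos h]
    ring
  · simp only [if_neg h, mul_zero, ite_self, Finset.sum_const_zero]

theorem core_nShapley (d n : ℕ) (v : (Fin d → ℝ) → Finset (Fin d) → ℝ) (x : Fin d → ℝ)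
    (S : Finset (Fin d)) (hSn : S.card ≤ n)
    (hM : ∀ A : Finset (Fin d), n < A.card → mobius d v x A = 0) :
    nShapley d v n x S = mobius d v x S := by
  unfold nShapley
  set N := n - S.card with hN
  have step1 : ∑ k ∈ Finset.range (N + 1),
      ∑ K ∈ Sᶜ.powerset.filter (fun K => K.card = k),
        (bernoulli k : ℝ) * deltaContribution d v x (S ∪ K)
      = ∑ k ∈ Finset.range (N + 1), ∑ K ∈ Sᶜ.powerset, ∑ A : Finset (Fin d),
          (if K.card = k then (bernoulli k : ℝ) *
            (if S ∪ K ⊆ A then mobius d v x A * (1 / (((A \ (S ∪ K)).card : ℝ) + 1)) else 0)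
           else 0) := by
    refine Finset.sum_congr rfl fun k _ => ?_
    rw [Finset.sum_filter]
    refine Finset.sum_congr rfl fun K _ => ?_
    by_cases hc : K.card = k
    · rw [if_pos hc, delta_eq, Finset.mul_sum]
      refine Finset.sum_congr rfl fun A _ => ?_
      rw [if_pos hc]
    · rw [if_neg hc]
      symm
      exact Finset.sum_eq_zero fun A _ => if_neg hc
  rw [step1]
  have step2 : ∀ k ∈ Finset.range (N + 1),
      (∑ K ∈ Sᶜ.powerset, ∑ A : Finset (Fin d),
        (if K.card = k then (bernoulli k : ℝ) *
          (if S ∪ K ⊆ A then mobius d v x A * (1 / (((A \ (S ∪ K)).card : ℝ) + 1)) else 0)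
         else 0))
      = ∑ A : Finset (Fin d), ∑ K ∈ Sᶜ.powerset,
        (if K.card = k then (bernoulli k : ℝ) *
          (if S ∪ K ⊆ A then mobius d v x A * (1 / (((A \ (S ∪ K)).card : ℝ) + 1)) else 0)
         else 0) := fun k _ => Finset.sum_comm
  rw [Finset.sum_congr rfl step2, Finset.sum_comm]
  have step3 : ∀ A : Finset (Fin d), A ∈ (Finset.univ : Finset (Finset (Fin d))) →
      (∑ k ∈ Finset.range (N + 1), ∑ K ∈ Sᶜ.powerset,
        (if K.card = k then (bernoulli k : ℝ) *
          (if S ∪ K ⊆ A then mobius d v x A * (1 / (((A \ (S ∪ K)).card : ℝ) + 1)) else 0)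
         else 0))
      = (if A = S then mobius d v x A else 0) := by
    intro A _
    by_cases hSA : S ⊆ A
    · have hrc := Finset.card_sdiff_add_card_eq_card hSA
      set r := (A \ S).card with hr
      by_cases hrN : r ≤ N
      · have stepk : ∀ k ∈ Finset.range (N + 1),
            (∑ K ∈ Sᶜ.powerset,
              (if K.card = k then (bernoulli k : ℝ) *
                (if S ∪ K ⊆ A then mobius d v x A * (1 / (((A \ (S ∪ K)).card : ℝ) + 1)) else 0)
               else 0))
            = (r.choose k : ℝ) *
                ((bernoulli k : ℝ) * (mobius d v x A * (1 / (((r - k : ℕ) : ℝ) + 1)))) := by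
          intro k _
          have hmerge : ∀ K ∈ Sᶜ.powerset,
              (if K.card = k then (bernoulli k : ℝ) *
                (if S ∪ K ⊆ A then mobius d v x A * (1 / (((A \ (S ∪ K)).card : ℝ) + 1)) else 0)
               else 0)
              = (if K.card = k ∧ S ∪ K ⊆ A then
                  (bernoulli k : ℝ) * (mobius d v x A * (1 / (((A \ (S ∪ K)).card : ℝ) + 1)))
                 else 0) := by
            intro K _
            by_cases h1 : K.card = k
            · by_cases h2 : S ∪ K ⊆ A
              · rw [if_pos h1, if_pos h2, if_pos ⟨h1, h2⟩]
              · rw [if_pos h1, if_neg h2, if_neg (fun hc : _ ∧ _ => h2 hc.2), mul_zero]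
            · rw [if_neg h1, if_neg (fun hc : _ ∧ _ => h1 hc.1)]
          rw [Finset.sum_congr rfl hmerge, ← Finset.sum_filter]
          have hsetk : Sᶜ.powerset.filter (fun K => K.card = k ∧ S ∪ K ⊆ A)
              = Finset.powersetCard k (A \ S) := by
            ext K
            simp only [mem_filter, mem_powerset, Finset.mem_powersetCard, union_subset_iff]
            constructor
            · rintro ⟨hKc, hKk, _, hKA⟩
              exact ⟨fun i hi => mem_sdiff.mpr ⟨hKA hi, mem_compl.mp (hKc hi)⟩, hKk⟩
            · rintro ⟨hKs, hKk⟩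
              exact ⟨fun i hi => mem_compl.mpr (mem_sdiff.mp (hKs hi)).2, hKk,
                hSA, fun i hi => (mem_sdiff.mp (hKs hi)).1⟩
          rw [hsetk]
          have hterm : ∀ K ∈ Finset.powersetCard k (A \ S),
              (bernoulli k : ℝ) * (mobius d v x A * (1 / (((A \ (S ∪ K)).card : ℝ) + 1)))
              = (bernoulli k : ℝ) * (mobius d v x A * (1 / (((r - k : ℕ) : ℝ) + 1))) := by
            intro K hK
            rcases Finset.mem_powersetCard.mp hK with ⟨hKs, hKk⟩
            have hsd : A \ (S ∪ K) = (A \ S) \ K := by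
              ext i
              simp only [mem_sdiff, mem_union]
              tauto
            rw [hsd, card_sdiff_of_subset hKs, hKk]
          rw [Finset.sum_congr rfl hterm, Finset.sum_const, Finset.card_powersetCard,
            nsmul_eq_mul]
        rw [Finset.sum_congr rfl stepk]
        have harr : ∀ k ∈ Finset.range (N + 1),
            (r.choose k : ℝ) *
              ((bernoulli k : ℝ) * (mobius d v x A * (1 / (((r - k : ℕ) : ℝ) + 1))))
            = mobius d v x A *
              ((bernoulli k : ℝ) * ((r.choose k : ℝ) * (1 / (((r - k : ℕ) : ℝ) + 1)))) := by
          intro k _; ring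
        rw [Finset.sum_congr rfl harr, ← Finset.mul_sum, bern_sum N r hrN]
        by_cases hAS : A = S
        · have hr0 : r = 0 := by
            rw [hr, hAS, sdiff_self]
            rfl
          rw [if_pos hr0, if_pos hAS, mul_one]
        · have hr0 : r ≠ 0 := by
            intro h0
            have : A \ S = ∅ := card_eq_zero.mp (hr ▸ h0)
            exact hAS (Finset.Subset.antisymm (Finset.sdiff_eq_empty_iff_subset.mp this) hSA)
          rw [if_neg hr0, if_neg hAS, mul_zero]
      · have hMA : mobius d v x A = 0 := by
          apply hM
          omega
        have hAS : A ≠ S := by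
          intro h
          rw [h, sdiff_self] at hr
          simp at hr
          omega
        rw [if_neg hAS]
        refine Finset.sum_eq_zero fun k _ => Finset.sum_eq_zero fun K _ => ?_
        split_ifs <;> simp [hMA]
    · have hAS : A ≠ S := fun h => hSA (by rw [h])
      rw [if_neg hAS]
      refine Finset.sum_eq_zero fun k _ => Finset.sum_eq_zero fun K _ => ?_
      split_ifs with h1 h2
      · exact absurd (subset_union_left.trans h2) hSA
      · exact mul_zero _
      · rfl
  rw [Finset.sum_congr rfl step3, Finset.sum_ite_eq' Finset.univ S (mobius d v x),
    if_pos (Finset.mem_univ S)]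

open MeasureTheory

/-- `interventionalValue d μ f x S = ∫ f(P_S(x,z)) dμ(z)`, where `P_S(x,z)` agrees
with `x` on `S` and with `z` outside of `S` (interventional SHAP). -/
noncomputable def interventionalValue (d : ℕ) (μ : Measure (Fin d → ℝ))
    (f : (Fin d → ℝ) → ℝ) (x : Fin d → ℝ) (S : Finset (Fin d)) : ℝ :=
  ∫ z, f (fun i => if i ∈ S then x i else z i) ∂μ

/-- `n`-Shapley Values recover GAMs of order `n` (interventional SHAP): if
`f(y) = ∑_{T ⊆ [d], |T| ≤ n} g_T(y)` with each `g_T` bounded, measurable, and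
depending only on the coordinates in `T`, and `v` is the interventional value
function of `f` with respect to a probability measure `μ`, then for `1 ≤ n ≤ d`,
every `x` and every nonempty `S ⊆ [d]` with `|S| ≤ n`, the `n`-Shapley Value
equals the Shapley-GAM component:
`Φ^n_S(x) = ∑_{L ⊆ S} (-1)^{|S|-|L|} · v(x, L)`. -/
theorem nShapley_recovers_gam (d : ℕ) (hd : 1 ≤ d) (n : ℕ) (hn : 1 ≤ n) (hnd : n ≤ d)
    (μ : Measure (Fin d → ℝ)) [IsProbabilityMeasure μ]
    (f : (Fin d → ℝ) → ℝ) (g : Finset (Fin d) → (Fin d → ℝ) → ℝ)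
    (hgmeas : ∀ T : Finset (Fin d), Measurable (g T))
    (hgbdd : ∀ T : Finset (Fin d), ∃ C : ℝ, ∀ y : Fin d → ℝ, |g T y| ≤ C)
    (hgdep : ∀ (T : Finset (Fin d)) (y z : Fin d → ℝ),
      (∀ i ∈ T, y i = z i) → g T y = g T z)
    (hf : ∀ y : Fin d → ℝ,
      f y = ∑ T ∈ Finset.univ.filter (fun T : Finset (Fin d) => T.card ≤ n), g T y)
    (x : Fin d → ℝ) (S : Finset (Fin d)) (hS : S.Nonempty) (hSn : S.card ≤ n) :
    nShapley d (interventionalValue d μ f) n x S =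
      ∑ L ∈ S.powerset,
        (-1 : ℝ) ^ (S.card - L.card) * interventionalValue d μ f x L := by
  -- measurability and boundedness of f
  have hfeq : f = fun y => ∑ T ∈ Finset.univ.filter (fun T : Finset (Fin d) => T.card ≤ n), g T y :=
    funext hf
  have hfmeas : Measurable f := by
    rw [hfeq]
    exact Finset.measurable_sum _ (fun T _ => hgmeas T)
  classical
  set Tset := Finset.univ.filter (fun T : Finset (Fin d) => T.card ≤ n) with hTset
  set C : Finset (Fin d) → ℝ := fun T => (hgbdd T).choose with hC
  have hCspec : ∀ T (y : Fin d → ℝ), |g T y| ≤ C T := fun T => (hgbdd T).choose_spec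
  have hfbdd : ∀ y : Fin d → ℝ, |f y| ≤ ∑ T ∈ Tset, C T := by
    intro y
    rw [hfeq]
    exact le_trans (Finset.abs_sum_le_sum_abs _ _)
      (Finset.sum_le_sum (fun T _ => hCspec T y))
  -- measurability of the projection map
  have hproj : ∀ L : Finset (Fin d),
      Measurable (fun z : Fin d → ℝ => (fun i => if i ∈ L then x i else z i)) := by
    intro L
    apply measurable_pi_lambda
    intro i
    by_cases hi : i ∈ L
    · simpa [hi] using (measurable_const : Measurable (fun _ : Fin d → ℝ => x i))
    · simpa [hi] using (measurable_pi_apply i)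
  have hint : ∀ L : Finset (Fin d),
      Integrable (fun z : Fin d → ℝ => f (fun i => if i ∈ L then x i else z i)) μ := by
    intro L
    refine Integrable.mono' (integrable_const (∑ T ∈ Tset, C T))
      ((hfmeas.comp (hproj L)).aestronglyMeasurable) ?_
    exact Filter.Eventually.of_forall (fun z => by
      rw [Real.norm_eq_abs]; exact hfbdd _)
  -- the key vanishing hypothesis
  have hM : ∀ A : Finset (Fin d), n < A.card → mobius d (interventionalValue d μ f) x A = 0 := by
    intro A hA
    have hmob : mobius d (interventionalValue d μ f) x A
        = ∫ z, (∑ L ∈ A.powerset,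
            (-1:ℝ)^(A.card - L.card) * f (fun i => if i ∈ L then x i else z i)) ∂μ := by
      rw [integral_finset_sum A.powerset
        (fun L _ => ((hint L).const_mul ((-1:ℝ)^(A.card - L.card))))]
      unfold mobius interventionalValue
      refine Finset.sum_congr rfl fun L _ => ?_
      rw [integral_const_mul]
    rw [hmob]
    have hzero : ∀ z : Fin d → ℝ,
        (∑ L ∈ A.powerset,
          (-1:ℝ)^(A.card - L.card) * f (fun i => if i ∈ L then x i else z i)) = 0 := by
      intro z
      have hswap : ∑ L ∈ A.powerset,
          (-1:ℝ)^(A.card - L.card) * f (fun i => if i ∈ L then x i else z i)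
          = ∑ T ∈ Tset, ∑ L ∈ A.powerset,
              (-1:ℝ)^(A.card - L.card) * g T (fun i => if i ∈ L then x i else z i) := by
        rw [← Finset.sum_comm]
        refine Finset.sum_congr rfl fun L _ => ?_
        rw [hf, Finset.mul_sum]
      rw [hswap]
      refine Finset.sum_eq_zero fun T hT => ?_
      have hTn : T.card ≤ n := by
        rw [hTset] at hT
        exact (Finset.mem_filter.mp hT).2
      have hnotsub : ¬ A ⊆ T := fun hsub => by
        have := card_le_card hsub
        omega
      rcases Finset.not_subset.mp hnotsub with ⟨i, hiA, hiT⟩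
      refine cancel_of_insert _ A i hiA ?_
      intro L
      refine hgdep T _ _ (fun j hj => ?_)
      have hji : j ≠ i := fun h => hiT (h ▸ hj)
      by_cases hjL : j ∈ L
      · simp [hjL, Finset.mem_insert]
      · simp [hjL, Finset.mem_insert, hji]
    rw [integral_congr_ae (Filter.Eventually.of_forall hzero)]
    simp
  have := core_nShapley d n (interventionalValue d μ f) x S hSn hM
  rw [this]
  rfl
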